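/- Let X₁,…,Xₙ be Banach spaces and let β be a reasonable crossnorm on X₁⊗⋯⊗Xₙ (i.e. ε(u) ≤ β(u) ≤ π(u) for all u). Then for all decomposable tensors p, q in the Segre cone Σ_{X₁,…,Xₙ} (the set of elementary tensors x¹⊗⋯⊗xⁿ), one has π(p − q) ≤ 2^{n−1} β(p − q). In particular, all reasonable crossnorms induce Lipschitz-equivalent metrics on the Segre cone. -/

import Mathlib

/- Common framework: Σ-operators, reasonable crossnorms, Σ-ideals and Σ-tensor norms,
following S. García-Hernández, "The duality between ideals of multilinear operators
and tensor norms". -/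

open scoped TensorProduct
open PiTensorProduct

universe u

noncomputable section

/-- The Segre cone: the set of decomposable (elementary) tensors in `⨂ᵢ Xᵢ`. -/
def Segre (𝕜 : Type u) [RCLike 𝕜] {ι : Type} [Fintype ι] (X : ι → Type u)
    [∀ i, NormedAddCommGroup (X i)] [∀ i, NormedSpace 𝕜 (X i)] :
    Set (⨂[𝕜] i, X i) :=
  {u | ∃ x : (i : ι) → X i, u = ⨂ₜ[𝕜] i, x i}



/-- The set of values `|x₁*⊗⋯⊗xₙ*(u)|` over functionals `xᵢ* ∈ B_{Xᵢ*}`. -/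
def epsSet {𝕜 : Type u} [RCLike 𝕜] {ι : Type} [Fintype ι] {X : ι → Type u}
    [∀ i, NormedAddCommGroup (X i)] [∀ i, NormedSpace 𝕜 (X i)]
    (u : ⨂[𝕜] i, X i) : Set ℝ :=
  {r | ∃ f : ∀ i, X i →L[𝕜] 𝕜, (∀ i, ‖f i‖ ≤ 1) ∧
    r = ‖PiTensorProduct.lift
      ((ContinuousMultilinearMap.mkPiAlgebra 𝕜 ι 𝕜).compContinuousLinearMap
        f).toMultilinearMap u‖}

/-- The classical injective tensor norm
`ε(u) = sup { |x₁*⊗⋯⊗xₙ*(u)| : xᵢ* ∈ B_{Xᵢ*} }`. -/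
def epsSeminorm (𝕜 : Type u) [RCLike 𝕜] {ι : Type} [Fintype ι] (X : ι → Type u)
    [∀ i, NormedAddCommGroup (X i)] [∀ i, NormedSpace 𝕜 (X i)] :
    (⨂[𝕜] i, X i) → ℝ := fun u => sSup (epsSet u)

section EpsLemmas

variable {𝕜 : Type u} [RCLike 𝕜] {ι : Type} [Fintype ι] [Nonempty ι] {X : ι → Type u}
    [∀ i, NormedAddCommGroup (X i)] [∀ i, NormedSpace 𝕜 (X i)]

theorem epsSet_le (u : ⨂[𝕜] i, X i) : ∀ r ∈ epsSet u, r ≤ projectiveSeminorm u := by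
  rintro r ⟨f, hf, rfl⟩
  refine (norm_eval_le_projectiveSeminorm _ u).trans ?_
  calc ‖(ContinuousMultilinearMap.mkPiAlgebra 𝕜 ι 𝕜).compContinuousLinearMap f‖ * ‖u‖
      ≤ 1 * ‖u‖ := by
        refine mul_le_mul_of_nonneg_right ?_ (norm_nonneg u)
        refine (ContinuousMultilinearMap.norm_compContinuousLinearMap_le _ _).trans ?_
        exact mul_le_one₀ ContinuousMultilinearMap.norm_mkPiAlgebra_le
          (Finset.prod_nonneg fun i _ => norm_nonneg _)
          (Finset.prod_le_one (fun i _ => norm_nonneg _) (fun i _ => hf i))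
    _ = projectiveSeminorm u := one_mul _

theorem epsSet_bdd (u : ⨂[𝕜] i, X i) : BddAbove (epsSet u) :=
  ⟨projectiveSeminorm u, fun r hr => epsSet_le u r hr⟩

theorem epsSeminorm_nonneg (u : ⨂[𝕜] i, X i) : 0 ≤ epsSeminorm 𝕜 X u :=
  Real.sSup_nonneg (by rintro r ⟨f, hf, rfl⟩; exact norm_nonneg _)

theorem epsSeminorm_le_projectiveSeminorm (u : ⨂[𝕜] i, X i) :
    epsSeminorm 𝕜 X u ≤ projectiveSeminorm u :=
  Real.sSup_le (epsSet_le u) (apply_nonneg projectiveSeminorm u)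

theorem epsSeminorm_add_le (u v : ⨂[𝕜] i, X i) :
    epsSeminorm 𝕜 X (u + v) ≤ epsSeminorm 𝕜 X u + epsSeminorm 𝕜 X v := by
  refine Real.sSup_le ?_ (add_nonneg (epsSeminorm_nonneg u) (epsSeminorm_nonneg v))
  rintro r ⟨f, hf, rfl⟩
  rw [map_add]
  refine (norm_add_le _ _).trans (add_le_add ?_ ?_)
  · exact le_csSup (epsSet_bdd u) ⟨f, hf, rfl⟩
  · exact le_csSup (epsSet_bdd v) ⟨f, hf, rfl⟩

theorem epsSeminorm_smul_le (c : 𝕜) (u : ⨂[𝕜] i, X i) :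
    epsSeminorm 𝕜 X (c • u) ≤ ‖c‖ * epsSeminorm 𝕜 X u := by
  refine Real.sSup_le ?_ (mul_nonneg (norm_nonneg c) (epsSeminorm_nonneg u))
  rintro r ⟨f, hf, rfl⟩
  rw [map_smul, norm_smul]
  exact mul_le_mul_of_nonneg_left (le_csSup (epsSet_bdd u) ⟨f, hf, rfl⟩) (norm_nonneg c)

theorem epsSeminorm_smul (c : 𝕜) (u : ⨂[𝕜] i, X i) :
    epsSeminorm 𝕜 X (c • u) = ‖c‖ * epsSeminorm 𝕜 X u := by
  rcases eq_or_ne c 0 with rfl | hc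
  · rw [norm_zero, zero_mul, zero_smul]
    refine le_antisymm (Real.sSup_le ?_ le_rfl) (epsSeminorm_nonneg 0)
    rintro r ⟨f, hf, rfl⟩
    simp
  · refine le_antisymm (epsSeminorm_smul_le c u) ?_
    have h := epsSeminorm_smul_le c⁻¹ (c • u)
    rw [inv_smul_smul₀ hc, norm_inv] at h
    calc ‖c‖ * epsSeminorm 𝕜 X u
        ≤ ‖c‖ * (‖c‖⁻¹ * epsSeminorm 𝕜 X (c • u)) :=
          mul_le_mul_of_nonneg_left h (norm_nonneg c)
      _ = epsSeminorm 𝕜 X (c • u) := by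
          rw [← mul_assoc, mul_inv_cancel₀ (norm_ne_zero_iff.mpr hc), one_mul]

end EpsLemmas


theorem projectiveSeminorm_map_le {𝕜 : Type u} [RCLike 𝕜] {ι : Type} [Fintype ι]
    {E F : ι → Type u} [∀ i, NormedAddCommGroup (E i)] [∀ i, NormedSpace 𝕜 (E i)]
    [∀ i, NormedAddCommGroup (F i)] [∀ i, NormedSpace 𝕜 (F i)]
    (g : ∀ i, E i →ₗ[𝕜] F i) (hg : ∀ i x, ‖g i x‖ ≤ ‖x‖) (u : ⨂[𝕜] i, E i) :
    projectiveSeminorm (PiTensorProduct.map g u) ≤ projectiveSeminorm u := by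
  rw [projectiveSeminorm_apply, projectiveSeminorm_apply]
  letI := nonempty_subtype.mpr (nonempty_lifts u)
  refine le_ciInf fun p => ?_
  have hmem : FreeAddMonoid.ofList
      (List.map (fun y : 𝕜 × (∀ i, E i) => (y.1, fun i => g i (y.2 i))) p.1.toList) ∈
      lifts (PiTensorProduct.map g u) := by
    rw [mem_lifts_iff]
    have hp := (mem_lifts_iff u p.1).mp p.2
    rw [FreeAddMonoid.toList_ofList]
    calc (List.map (fun x : 𝕜 × (∀ i, F i) => x.1 • ⨂ₜ[𝕜] i, x.2 i)
          (List.map (fun y : 𝕜 × (∀ i, E i) => (y.1, fun i => g i (y.2 i))) p.1.toList)).sum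
        = (List.map ((PiTensorProduct.map g) ∘ (fun x : 𝕜 × (∀ i, E i) =>
            x.1 • ⨂ₜ[𝕜] i, x.2 i)) p.1.toList).sum := by
          rw [List.map_map]
          congr 1
          refine List.map_congr_left fun y _ => ?_
          simp [PiTensorProduct.map_tprod]
      _ = PiTensorProduct.map g u := by
          rw [← List.map_map, ← map_list_sum, hp]
  refine ciInf_le_of_le (bddBelow_projectiveSemiNormAux _) ⟨_, hmem⟩ ?_
  simp only [projectiveSeminormAux, FreeAddMonoid.toList_ofList, List.map_map]
  refine List.sum_le_sum fun y _ => ?_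
  simp only [Function.comp_apply]
  refine mul_le_mul_of_nonneg_left ?_ (norm_nonneg _)
  exact Finset.prod_le_prod (fun i _ => norm_nonneg _) (fun i _ => hg i _)

/-- A reasonable crossnorm on `⨂ᵢ Xᵢ`: a seminorm-like functional lying between the
injective and projective tensor seminorms. -/
structure ReasonableCrossnorm (𝕜 : Type u) [RCLike 𝕜] {ι : Type} [Fintype ι] [Nonempty ι]
    (X : ι → Type u) [∀ i, NormedAddCommGroup (X i)] [∀ i, NormedSpace 𝕜 (X i)] :
    Type u where
  toFun : (⨂[𝕜] i, X i) → ℝ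
  add_le' : ∀ u v, toFun (u + v) ≤ toFun u + toFun v
  smul' : ∀ (c : 𝕜) (u), toFun (c • u) = ‖c‖ * toFun u
  le_proj' : ∀ u, toFun u ≤ projectiveSeminorm u
  inj_le' : ∀ u, epsSeminorm 𝕜 X u ≤ toFun u

section Basic

variable {𝕜 : Type u} [RCLike 𝕜] {ι : Type} [Fintype ι] [Nonempty ι] {X : ι → Type u}
    [∀ i, NormedAddCommGroup (X i)] [∀ i, NormedSpace 𝕜 (X i)]
    {Y : Type u} [NormedAddCommGroup Y] [NormedSpace 𝕜 Y]

/-- The projective tensor norm `π` as a reasonable crossnorm. -/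
def ReasonableCrossnorm.proj : ReasonableCrossnorm 𝕜 X where
  toFun := projectiveSeminorm
  add_le' := fun u v => map_add_le_add _ u v
  smul' := fun c u => map_smul_eq_mul _ c u
  le_proj' := fun _ => le_rfl
  inj_le' := fun u => epsSeminorm_le_projectiveSeminorm u

/-- The injective tensor norm `ε` as a reasonable crossnorm. -/
def ReasonableCrossnorm.inj : ReasonableCrossnorm 𝕜 X where
  toFun := epsSeminorm 𝕜 X
  add_le' := fun u v => epsSeminorm_add_le u v
  smul' := fun c u => epsSeminorm_smul c u
  le_proj' := fun u => epsSeminorm_le_projectiveSeminorm u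
  inj_le' := fun _ => le_rfl

/-- `𝓛^β(X₁,…,Xₙ)`: the space of linear functionals on `⨂ᵢ Xᵢ` that are bounded
with respect to `β` (equivalently, multilinear forms whose `β`-linearization is
bounded). -/
def BetaDual (β : ReasonableCrossnorm 𝕜 X) : Submodule 𝕜 ((⨂[𝕜] i, X i) →ₗ[𝕜] 𝕜) where
  carrier := {f | ∃ C, 0 ≤ C ∧ ∀ u, ‖f u‖ ≤ C * β.toFun u}
  add_mem' := by
    rintro f g ⟨C, hC, hf⟩ ⟨D, hD, hg⟩
    exact ⟨C + D, add_nonneg hC hD, fun u => by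
      simpa [add_mul] using (norm_add_le (f u) (g u)).trans (add_le_add (hf u) (hg u))⟩
  zero_mem' := ⟨0, le_rfl, fun u => by simp⟩
  smul_mem' := by
    rintro c f ⟨C, hC, hf⟩
    exact ⟨‖c‖ * C, mul_nonneg (norm_nonneg c) hC, fun u => by
      simpa [norm_smul, mul_assoc] using mul_le_mul_of_nonneg_left (hf u) (norm_nonneg c)⟩

/-- The dual norm `‖·‖_β` of a `β`-bounded functional (multilinear form). -/
def betaDualNorm (β : ReasonableCrossnorm 𝕜 X) (f : (⨂[𝕜] i, X i) →ₗ[𝕜] 𝕜) : ℝ :=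
  sInf {C | 0 ≤ C ∧ ∀ u, ‖f u‖ ≤ C * β.toFun u}

/-- Evaluation of continuous functionals at a point, as a linear map into the
algebraic dual of the topological dual. -/
def evalCLM (𝕜 : Type u) [RCLike 𝕜] (M : Type u) [NormedAddCommGroup M]
    [NormedSpace 𝕜 M] : M →ₗ[𝕜] ((M →L[𝕜] 𝕜) →ₗ[𝕜] 𝕜) where
  toFun y :=
    { toFun := fun g => g y
      map_add' := fun g h => rfl
      map_smul' := fun c g => rfl }
  map_add' y z := by ext g; simp
  map_smul' c y := by ext g; simp

/-- Evaluation of `β`-bounded forms at a tensor. -/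
def evalBeta (β : ReasonableCrossnorm 𝕜 X) :
    (⨂[𝕜] i, X i) →ₗ[𝕜] ((BetaDual β) →ₗ[𝕜] 𝕜) where
  toFun u :=
    { toFun := fun f => f.1 u
      map_add' := fun f g => rfl
      map_smul' := fun c f => rfl }
  map_add' u v := by ext f; exact f.1.map_add u v
  map_smul' c u := by ext f; exact f.1.map_smul c u

/-- Evaluation pairing: an element of `𝓛^β(X₁,…,Xₙ) ⊗ Y` acts as a functional on
`X₁⊗⋯⊗Xₙ⊗Y*` by `⟨φ⊗y , u⊗y*⟩ = φ(u)·y*(y)`. -/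
def evalLD (β : ReasonableCrossnorm 𝕜 X) :
    ((BetaDual β) ⊗[𝕜] Y) →ₗ[𝕜] (((⨂[𝕜] i, X i) ⊗[𝕜] (Y →L[𝕜] 𝕜)) →ₗ[𝕜] 𝕜) :=
  (TensorProduct.dualDistrib 𝕜 (⨂[𝕜] i, X i) (Y →L[𝕜] 𝕜)).comp
    (TensorProduct.map (BetaDual β).subtype (evalCLM 𝕜 Y))

/-- Converse pairing: an element of `X₁⊗⋯⊗Xₙ⊗Y` acts as a functional on
`𝓛^β(X₁,…,Xₙ) ⊗ Y*` by `⟨u⊗y , φ⊗y*⟩ = φ(u)·y*(y)`. -/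
def pairSF (β : ReasonableCrossnorm 𝕜 X) :
    ((⨂[𝕜] i, X i) ⊗[𝕜] Y) →ₗ[𝕜] (((BetaDual β) ⊗[𝕜] (Y →L[𝕜] 𝕜)) →ₗ[𝕜] 𝕜) :=
  (TensorProduct.dualDistrib 𝕜 (BetaDual β) (Y →L[𝕜] 𝕜)).comp
    (TensorProduct.map (evalBeta β) (evalCLM 𝕜 Y))

/-- The functional `φ ⊗ y*` on `X₁⊗⋯⊗Xₙ⊗Y`. -/
def funcSY (φ : (⨂[𝕜] i, X i) →ₗ[𝕜] 𝕜) (g : Y →L[𝕜] 𝕜) :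
    ((⨂[𝕜] i, X i) ⊗[𝕜] Y) →ₗ[𝕜] 𝕜 :=
  TensorProduct.dualDistrib 𝕜 (⨂[𝕜] i, X i) Y (φ ⊗ₜ[𝕜] (g : Y →ₗ[𝕜] 𝕜))

/-- The rank one multilinear operator `φ · y : (x¹,…,xⁿ) ↦ φ(x¹,…,xⁿ)·y`. -/
def rankOne (φ : MultilinearMap 𝕜 X 𝕜) (y : Y) : MultilinearMap 𝕜 X Y :=
  (LinearMap.toSpanSingleton 𝕜 Y y).compMultilinearMap φ

/-- The multilinear operator associated to a linear map on the tensor product. -/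
def toMulti (L : (⨂[𝕜] i, X i) →ₗ[𝕜] Y) : MultilinearMap 𝕜 X Y :=
  L.compMultilinearMap (PiTensorProduct.tprod 𝕜)

/-- The finite rank operator (as a linear map on the tensor product) associated to
`v ∈ 𝓛^β(X₁,…,Xₙ) ⊗ Y` via `φ ⊗ y ↦ φ(·)y`. -/
def toOp (β : ReasonableCrossnorm 𝕜 X) :
    ((BetaDual β) ⊗[𝕜] Y) →ₗ[𝕜] ((⨂[𝕜] i, X i) →ₗ[𝕜] Y) :=
  TensorProduct.lift ((LinearMap.smulRightₗ).comp (BetaDual β).subtype)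

/-- The restriction `β|` of a reasonable crossnorm to subspaces `Eᵢ ⊂ Xᵢ`
(Remark 2.1 of the paper: it is again a reasonable crossnorm). -/
def ReasonableCrossnorm.restrict (β : ReasonableCrossnorm 𝕜 X)
    (E : ∀ i, Submodule 𝕜 (X i)) :
    ReasonableCrossnorm 𝕜 (fun i => (E i : Type u)) where
  toFun u := β.toFun (PiTensorProduct.map (fun i => (E i).subtype) u)
  add_le' u v := by simp only [map_add]; exact β.add_le' _ _
  smul' c u := by simp only [map_smul]; exact β.smul' _ _
  le_proj' u :=
    (β.le_proj' _).trans
      (projectiveSeminorm_map_le _ (fun i x => le_of_eq rfl) u)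
  inj_le' u := by
    refine Real.sSup_le ?_ (le_trans (epsSeminorm_nonneg _) (β.inj_le' _))
    rintro r ⟨f, hf, rfl⟩
    choose g hgx hgn using fun i => exists_extension_norm_eq (E i) (f i)
    have key : PiTensorProduct.lift
        ((ContinuousMultilinearMap.mkPiAlgebra 𝕜 ι 𝕜).compContinuousLinearMap
          f).toMultilinearMap u =
        PiTensorProduct.lift
          ((ContinuousMultilinearMap.mkPiAlgebra 𝕜 ι 𝕜).compContinuousLinearMap
            g).toMultilinearMap
          (PiTensorProduct.map (fun i => (E i).subtype) u) := by
      rw [← LinearMap.comp_apply, PiTensorProduct.lift_comp_map]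
      congr 1
      ext m
      simp only [LinearMap.compMultilinearMap_apply, PiTensorProduct.lift.tprod,
        ContinuousMultilinearMap.coe_coe, MultilinearMap.compLinearMap_apply,
        ContinuousMultilinearMap.compContinuousLinearMap_apply,
        ContinuousMultilinearMap.mkPiAlgebra_apply]
      exact Finset.prod_congr rfl fun i _ => (hgx i (m i)).symm
    rw [key]
    refine le_trans (le_csSup (epsSet_bdd _) ⟨g, fun i => (hgn i).le.trans (hf i), rfl⟩)
      (β.inj_le' _)

/-- Restriction of `β`-bounded forms to subspaces. -/
def restrictDual (β : ReasonableCrossnorm 𝕜 X) (E : ∀ i, Submodule 𝕜 (X i)) :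
    (BetaDual β) →ₗ[𝕜] (BetaDual (β.restrict E)) where
  toFun f := ⟨f.1 ∘ₗ PiTensorProduct.map (fun i => (E i).subtype),
    by obtain ⟨C, hC, hb⟩ := f.2; exact ⟨C, hC, fun u => hb _⟩⟩
  map_add' f g := by ext u; rfl
  map_smul' c f := by ext u; rfl

/-- The operator `Q_L ∘ f_T ∘ I_{E₁,…,Eₙ}` between finite dimensional spaces. -/
def smallOp {L : Submodule 𝕜 Y} (hL : IsClosed (L : Set Y))
    (T : MultilinearMap 𝕜 X Y) (E : ∀ i, Submodule 𝕜 (X i)) :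
    MultilinearMap 𝕜 (fun i => (E i : Type u)) (Y ⧸ L) :=
  toMulti (L.mkQ ∘ₗ PiTensorProduct.lift T ∘ₗ PiTensorProduct.map (fun i => (E i).subtype))

end Basic
section Norms

variable {𝕜 : Type u} [RCLike 𝕜] {ι : Type} [Fintype ι] [Nonempty ι] {X : ι → Type u}
    [∀ i, NormedAddCommGroup (X i)] [∀ i, NormedSpace 𝕜 (X i)]
    {Y : Type u} [NormedAddCommGroup Y] [NormedSpace 𝕜 Y]

/-- The Lipschitz constant `Lip^β(f)` of (the restriction to the Segre cone of) a linear
map on the tensor product, with respect to the metric induced by `β`. -/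
def lipschitzNormOn (β : ReasonableCrossnorm 𝕜 X) (f : (⨂[𝕜] i, X i) →ₗ[𝕜] Y) : ℝ :=
  sInf {C | 0 ≤ C ∧ ∀ p ∈ Segre 𝕜 X, ∀ q ∈ Segre 𝕜 X,
    ‖f p - f q‖ ≤ C * β.toFun (p - q)}

/-- The greatest Σ-tensor norm on spaces, `π^β`. -/
def piBetaS (β : ReasonableCrossnorm 𝕜 X) (u : (⨂[𝕜] i, X i) ⊗[𝕜] Y) : ℝ :=
  sInf {r | ∃ (m : ℕ) (p q : Fin m → ⨂[𝕜] i, X i) (y : Fin m → Y),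
    (∀ k, p k ∈ Segre 𝕜 X ∧ q k ∈ Segre 𝕜 X) ∧
    u = ∑ k, (p k - q k) ⊗ₜ[𝕜] y k ∧ r = ∑ k, β.toFun (p k - q k) * ‖y k‖}

/-- The least Σ-tensor norm on spaces, `ε^β`. -/
def epsBetaS (β : ReasonableCrossnorm 𝕜 X) (u : (⨂[𝕜] i, X i) ⊗[𝕜] Y) : ℝ :=
  sSup {r | ∃ (φ : (⨂[𝕜] i, X i) →ₗ[𝕜] 𝕜) (g : Y →L[𝕜] 𝕜),
    (∀ w, ‖φ w‖ ≤ β.toFun w) ∧ ‖g‖ ≤ 1 ∧ r = ‖funcSY φ g u‖}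

/-- The greatest Σ-tensor norm on duals, `π_β`. -/
def piBetaD (β : ReasonableCrossnorm 𝕜 X) (v : (BetaDual β) ⊗[𝕜] Y) : ℝ :=
  sInf {r | ∃ (m : ℕ) (f : Fin m → BetaDual β) (y : Fin m → Y) (C : Fin m → ℝ),
    (∀ k, 0 ≤ C k ∧ ∀ u, ‖(f k).1 u‖ ≤ C k * β.toFun u) ∧
    v = ∑ k, (f k) ⊗ₜ[𝕜] (y k) ∧ r = ∑ k, C k * ‖y k‖}

/-- The least Σ-tensor norm on duals, `ε_β`. -/
def epsBetaD (β : ReasonableCrossnorm 𝕜 X) (v : (BetaDual β) ⊗[𝕜] Y) : ℝ :=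
  sSup {r | ∃ p ∈ Segre 𝕜 X, ∃ q ∈ Segre 𝕜 X, ∃ g : Y →L[𝕜] 𝕜,
    β.toFun (p - q) ≤ 1 ∧ ‖g‖ ≤ 1 ∧ r = ‖evalLD β v ((p - q) ⊗ₜ[𝕜] g)‖}

end Norms
section Structures

variable (𝕜 : Type u) [RCLike 𝕜]

/-- A Σ-ideal of multilinear operators on the class of normed (Banach) spaces
(Definition 3.1): an assignment, to each election `(n, X₁,…,Xₙ, Y, β)`, of a class of
multilinear operators together with an ideal norm, satisfying I1, I2, I3. -/
structure SigmaIdeal where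
  Mem : ∀ {ι : Type} [Fintype ι] [Nonempty ι] {X : ι → Type u}
    [∀ i, NormedAddCommGroup (X i)] [∀ i, NormedSpace 𝕜 (X i)]
    {Y : Type u} [NormedAddCommGroup Y] [NormedSpace 𝕜 Y],
    ReasonableCrossnorm 𝕜 X → MultilinearMap 𝕜 X Y → Prop
  anorm : ∀ {ι : Type} [Fintype ι] [Nonempty ι] {X : ι → Type u}
    [∀ i, NormedAddCommGroup (X i)] [∀ i, NormedSpace 𝕜 (X i)]
    {Y : Type u} [NormedAddCommGroup Y] [NormedSpace 𝕜 Y],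
    ReasonableCrossnorm 𝕜 X → MultilinearMap 𝕜 X Y → ℝ
  /-- I1: rank one operators belong to the components. -/
  I1 : ∀ {ι : Type} [Fintype ι] [Nonempty ι] {X : ι → Type u}
    [∀ i, NormedAddCommGroup (X i)] [∀ i, NormedSpace 𝕜 (X i)]
    {Y : Type u} [NormedAddCommGroup Y] [NormedSpace 𝕜 Y]
    (β : ReasonableCrossnorm 𝕜 X) (φ : MultilinearMap 𝕜 X 𝕜) (C : ℝ), 0 ≤ C →
    (∀ u, ‖PiTensorProduct.lift φ u‖ ≤ C * β.toFun u) → ∀ y : Y,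
    Mem β (rankOne φ y) ∧ anorm β (rankOne φ y) ≤ C * ‖y‖
  /-- I2: `Lip^β(f_T) ≤ A^β(T)`. -/
  I2 : ∀ {ι : Type} [Fintype ι] [Nonempty ι] {X : ι → Type u}
    [∀ i, NormedAddCommGroup (X i)] [∀ i, NormedSpace 𝕜 (X i)]
    {Y : Type u} [NormedAddCommGroup Y] [NormedSpace 𝕜 Y]
    (β : ReasonableCrossnorm 𝕜 X) (T : MultilinearMap 𝕜 X Y), Mem β T →
    ∀ p ∈ Segre 𝕜 X, ∀ q ∈ Segre 𝕜 X,
      ‖PiTensorProduct.lift T p - PiTensorProduct.lift T q‖ ≤ anorm β T * β.toFun (p - q)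
  /-- I3: the Σ-ideal property. -/
  I3 : ∀ {ι κ : Type} [Fintype ι] [Nonempty ι] [Fintype κ] [Nonempty κ]
    {X : ι → Type u} [∀ i, NormedAddCommGroup (X i)] [∀ i, NormedSpace 𝕜 (X i)]
    {Z : κ → Type u} [∀ j, NormedAddCommGroup (Z j)] [∀ j, NormedSpace 𝕜 (Z j)]
    {Y W : Type u} [NormedAddCommGroup Y] [NormedSpace 𝕜 Y]
    [NormedAddCommGroup W] [NormedSpace 𝕜 W]
    (β : ReasonableCrossnorm 𝕜 X) (θ : ReasonableCrossnorm 𝕜 Z)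
    (R : (⨂[𝕜] j, Z j) →ₗ[𝕜] (⨂[𝕜] i, X i)) (CR : ℝ), 0 ≤ CR →
    (∀ v, β.toFun (R v) ≤ CR * θ.toFun v) →
    (∀ p ∈ Segre 𝕜 Z, R p ∈ Segre 𝕜 X) →
    ∀ (T : MultilinearMap 𝕜 X Y), Mem β T → ∀ (S : Y →L[𝕜] W),
    Mem θ (toMulti (S.toLinearMap ∘ₗ PiTensorProduct.lift T ∘ₗ R)) ∧
      anorm θ (toMulti (S.toLinearMap ∘ₗ PiTensorProduct.lift T ∘ₗ R)) ≤
        CR * anorm β T * ‖S‖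

/-- A Σ-tensor norm on spaces (Definition 4.1): an assignment, to each election, of a
norm on `X₁⊗⋯⊗Xₙ⊗Y` satisfying S1, S2 and the uniform property S3. -/
structure SigmaTensorNormOnSpaces where
  tn : ∀ {ι : Type} [Fintype ι] [Nonempty ι] {X : ι → Type u}
    [∀ i, NormedAddCommGroup (X i)] [∀ i, NormedSpace 𝕜 (X i)]
    {Y : Type u} [NormedAddCommGroup Y] [NormedSpace 𝕜 Y],
    ReasonableCrossnorm 𝕜 X → ((⨂[𝕜] i, X i) ⊗[𝕜] Y) → ℝ
  tn_add_le : ∀ {ι : Type} [Fintype ι] [Nonempty ι] {X : ι → Type u}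
    [∀ i, NormedAddCommGroup (X i)] [∀ i, NormedSpace 𝕜 (X i)]
    {Y : Type u} [NormedAddCommGroup Y] [NormedSpace 𝕜 Y]
    (β : ReasonableCrossnorm 𝕜 X) (u v : (⨂[𝕜] i, X i) ⊗[𝕜] Y),
    tn β (u + v) ≤ tn β u + tn β v
  tn_smul : ∀ {ι : Type} [Fintype ι] [Nonempty ι] {X : ι → Type u}
    [∀ i, NormedAddCommGroup (X i)] [∀ i, NormedSpace 𝕜 (X i)]
    {Y : Type u} [NormedAddCommGroup Y] [NormedSpace 𝕜 Y]
    (β : ReasonableCrossnorm 𝕜 X) (c : 𝕜) (u : (⨂[𝕜] i, X i) ⊗[𝕜] Y),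
    tn β (c • u) = ‖c‖ * tn β u
  /-- S1. -/
  S1 : ∀ {ι : Type} [Fintype ι] [Nonempty ι] {X : ι → Type u}
    [∀ i, NormedAddCommGroup (X i)] [∀ i, NormedSpace 𝕜 (X i)]
    {Y : Type u} [NormedAddCommGroup Y] [NormedSpace 𝕜 Y]
    (β : ReasonableCrossnorm 𝕜 X), ∀ p ∈ Segre 𝕜 X, ∀ q ∈ Segre 𝕜 X, ∀ y : Y,
    tn β ((p - q) ⊗ₜ[𝕜] y) ≤ β.toFun (p - q) * ‖y‖
  /-- S2. -/
  S2 : ∀ {ι : Type} [Fintype ι] [Nonempty ι] {X : ι → Type u}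
    [∀ i, NormedAddCommGroup (X i)] [∀ i, NormedSpace 𝕜 (X i)]
    {Y : Type u} [NormedAddCommGroup Y] [NormedSpace 𝕜 Y]
    (β : ReasonableCrossnorm 𝕜 X) (φ : (⨂[𝕜] i, X i) →ₗ[𝕜] 𝕜) (C : ℝ), 0 ≤ C →
    (∀ w, ‖φ w‖ ≤ C * β.toFun w) → ∀ (g : Y →L[𝕜] 𝕜) (u : (⨂[𝕜] i, X i) ⊗[𝕜] Y),
    ‖funcSY φ g u‖ ≤ C * ‖g‖ * tn β u
  /-- S3: the uniform property. -/
  S3 : ∀ {ι κ : Type} [Fintype ι] [Nonempty ι] [Fintype κ] [Nonempty κ]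
    {X : ι → Type u} [∀ i, NormedAddCommGroup (X i)] [∀ i, NormedSpace 𝕜 (X i)]
    {Z : κ → Type u} [∀ j, NormedAddCommGroup (Z j)] [∀ j, NormedSpace 𝕜 (Z j)]
    {Y W : Type u} [NormedAddCommGroup Y] [NormedSpace 𝕜 Y]
    [NormedAddCommGroup W] [NormedSpace 𝕜 W]
    (β : ReasonableCrossnorm 𝕜 X) (θ : ReasonableCrossnorm 𝕜 Z)
    (R : (⨂[𝕜] j, Z j) →ₗ[𝕜] (⨂[𝕜] i, X i)) (CR : ℝ), 0 ≤ CR →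
    (∀ v, β.toFun (R v) ≤ CR * θ.toFun v) →
    (∀ p ∈ Segre 𝕜 Z, R p ∈ Segre 𝕜 X) →
    ∀ (S : W →L[𝕜] Y) (u : (⨂[𝕜] j, Z j) ⊗[𝕜] W),
    tn β (TensorProduct.map R S.toLinearMap u) ≤ CR * ‖S‖ * tn θ u

/-- A Σ-tensor norm on duals (Definition 4.2): an assignment, to each election, of a
norm on `𝓛^β(X₁,…,Xₙ) ⊗ Y` satisfying D1, D2 and the uniform property D3 with respect
to Σ-preserving operators. -/
structure SigmaTensorNormOnDuals where
  tn : ∀ {ι : Type} [Fintype ι] [Nonempty ι] {X : ι → Type u}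
    [∀ i, NormedAddCommGroup (X i)] [∀ i, NormedSpace 𝕜 (X i)]
    {Y : Type u} [NormedAddCommGroup Y] [NormedSpace 𝕜 Y]
    (β : ReasonableCrossnorm 𝕜 X), ((BetaDual β) ⊗[𝕜] Y) → ℝ
  tn_add_le : ∀ {ι : Type} [Fintype ι] [Nonempty ι] {X : ι → Type u}
    [∀ i, NormedAddCommGroup (X i)] [∀ i, NormedSpace 𝕜 (X i)]
    {Y : Type u} [NormedAddCommGroup Y] [NormedSpace 𝕜 Y]
    (β : ReasonableCrossnorm 𝕜 X) (v w : (BetaDual β) ⊗[𝕜] Y),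
    tn β (v + w) ≤ tn β v + tn β w
  tn_smul : ∀ {ι : Type} [Fintype ι] [Nonempty ι] {X : ι → Type u}
    [∀ i, NormedAddCommGroup (X i)] [∀ i, NormedSpace 𝕜 (X i)]
    {Y : Type u} [NormedAddCommGroup Y] [NormedSpace 𝕜 Y]
    (β : ReasonableCrossnorm 𝕜 X) (c : 𝕜) (v : (BetaDual β) ⊗[𝕜] Y),
    tn β (c • v) = ‖c‖ * tn β v
  /-- D1. -/
  D1 : ∀ {ι : Type} [Fintype ι] [Nonempty ι] {X : ι → Type u}
    [∀ i, NormedAddCommGroup (X i)] [∀ i, NormedSpace 𝕜 (X i)]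
    {Y : Type u} [NormedAddCommGroup Y] [NormedSpace 𝕜 Y]
    (β : ReasonableCrossnorm 𝕜 X) (f : BetaDual β) (C : ℝ), 0 ≤ C →
    (∀ u, ‖f.1 u‖ ≤ C * β.toFun u) → ∀ y : Y, tn β (f ⊗ₜ[𝕜] y) ≤ C * ‖y‖
  /-- D2. -/
  D2 : ∀ {ι : Type} [Fintype ι] [Nonempty ι] {X : ι → Type u}
    [∀ i, NormedAddCommGroup (X i)] [∀ i, NormedSpace 𝕜 (X i)]
    {Y : Type u} [NormedAddCommGroup Y] [NormedSpace 𝕜 Y]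
    (β : ReasonableCrossnorm 𝕜 X), ∀ p ∈ Segre 𝕜 X, ∀ q ∈ Segre 𝕜 X,
    ∀ (g : Y →L[𝕜] 𝕜) (v : (BetaDual β) ⊗[𝕜] Y),
    ‖evalLD β v ((p - q) ⊗ₜ[𝕜] g)‖ ≤ β.toFun (p - q) * ‖g‖ * tn β v
  /-- D3: the uniform property with respect to Σ-preserving operators. -/
  D3 : ∀ {ι κ : Type} [Fintype ι] [Nonempty ι] [Fintype κ] [Nonempty κ]
    {X : ι → Type u} [∀ i, NormedAddCommGroup (X i)] [∀ i, NormedSpace 𝕜 (X i)]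
    {Z : κ → Type u} [∀ j, NormedAddCommGroup (Z j)] [∀ j, NormedSpace 𝕜 (Z j)]
    {Y W : Type u} [NormedAddCommGroup Y] [NormedSpace 𝕜 Y]
    [NormedAddCommGroup W] [NormedSpace 𝕜 W]
    (β : ReasonableCrossnorm 𝕜 X) (θ : ReasonableCrossnorm 𝕜 Z)
    (A : (BetaDual β) →ₗ[𝕜] (BetaDual θ)) (CA : ℝ), 0 ≤ CA →
    (∀ (f : BetaDual β) (C : ℝ), 0 ≤ C → (∀ u, ‖f.1 u‖ ≤ C * β.toFun u) →
      ∀ w, ‖(A f).1 w‖ ≤ CA * C * θ.toFun w) →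
    (∀ q ∈ Segre 𝕜 Z, ∃ p ∈ Segre 𝕜 X, ∀ f : BetaDual β, (A f).1 q = f.1 p) →
    ∀ (B : Y →L[𝕜] W) (v : (BetaDual β) ⊗[𝕜] Y),
    tn θ (TensorProduct.map A B.toLinearMap v) ≤ CA * ‖B‖ * tn β v

end Structures
section StructuresFin

variable (𝕜 : Type u) [RCLike 𝕜]

/-- A Σ-ideal of multilinear operators on the class of finite dimensional normed spaces
(Definition 3.1): an assignment, to each election `(n, X₁,…,Xₙ, Y, β)`, of a class of
multilinear operators together with an ideal norm, satisfying I1, I2, I3. -/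
structure SigmaIdealFin where
  Mem : ∀ {ι : Type} [Fintype ι] [Nonempty ι] {X : ι → Type u}
    [∀ i, NormedAddCommGroup (X i)] [∀ i, NormedSpace 𝕜 (X i)] [∀ i, FiniteDimensional 𝕜 (X i)]
    {Y : Type u} [NormedAddCommGroup Y] [NormedSpace 𝕜 Y] [FiniteDimensional 𝕜 Y],
    ReasonableCrossnorm 𝕜 X → MultilinearMap 𝕜 X Y → Prop
  anorm : ∀ {ι : Type} [Fintype ι] [Nonempty ι] {X : ι → Type u}
    [∀ i, NormedAddCommGroup (X i)] [∀ i, NormedSpace 𝕜 (X i)] [∀ i, FiniteDimensional 𝕜 (X i)]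
    {Y : Type u} [NormedAddCommGroup Y] [NormedSpace 𝕜 Y] [FiniteDimensional 𝕜 Y],
    ReasonableCrossnorm 𝕜 X → MultilinearMap 𝕜 X Y → ℝ
  /-- I1: rank one operators belong to the components. -/
  I1 : ∀ {ι : Type} [Fintype ι] [Nonempty ι] {X : ι → Type u}
    [∀ i, NormedAddCommGroup (X i)] [∀ i, NormedSpace 𝕜 (X i)] [∀ i, FiniteDimensional 𝕜 (X i)]
    {Y : Type u} [NormedAddCommGroup Y] [NormedSpace 𝕜 Y] [FiniteDimensional 𝕜 Y]
    (β : ReasonableCrossnorm 𝕜 X) (φ : MultilinearMap 𝕜 X 𝕜) (C : ℝ), 0 ≤ C →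
    (∀ u, ‖PiTensorProduct.lift φ u‖ ≤ C * β.toFun u) → ∀ y : Y,
    Mem β (rankOne φ y) ∧ anorm β (rankOne φ y) ≤ C * ‖y‖
  /-- I2: `Lip^β(f_T) ≤ A^β(T)`. -/
  I2 : ∀ {ι : Type} [Fintype ι] [Nonempty ι] {X : ι → Type u}
    [∀ i, NormedAddCommGroup (X i)] [∀ i, NormedSpace 𝕜 (X i)] [∀ i, FiniteDimensional 𝕜 (X i)]
    {Y : Type u} [NormedAddCommGroup Y] [NormedSpace 𝕜 Y] [FiniteDimensional 𝕜 Y]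
    (β : ReasonableCrossnorm 𝕜 X) (T : MultilinearMap 𝕜 X Y), Mem β T →
    ∀ p ∈ Segre 𝕜 X, ∀ q ∈ Segre 𝕜 X,
      ‖PiTensorProduct.lift T p - PiTensorProduct.lift T q‖ ≤ anorm β T * β.toFun (p - q)
  /-- I3: the Σ-ideal property. -/
  I3 : ∀ {ι κ : Type} [Fintype ι] [Nonempty ι] [Fintype κ] [Nonempty κ]
    {X : ι → Type u} [∀ i, NormedAddCommGroup (X i)] [∀ i, NormedSpace 𝕜 (X i)] [∀ i, FiniteDimensional 𝕜 (X i)]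
    {Z : κ → Type u} [∀ j, NormedAddCommGroup (Z j)] [∀ j, NormedSpace 𝕜 (Z j)] [∀ j, FiniteDimensional 𝕜 (Z j)]
    {Y W : Type u} [NormedAddCommGroup Y] [NormedSpace 𝕜 Y] [FiniteDimensional 𝕜 Y]
    [NormedAddCommGroup W] [NormedSpace 𝕜 W] [FiniteDimensional 𝕜 W]
    (β : ReasonableCrossnorm 𝕜 X) (θ : ReasonableCrossnorm 𝕜 Z)
    (R : (⨂[𝕜] j, Z j) →ₗ[𝕜] (⨂[𝕜] i, X i)) (CR : ℝ), 0 ≤ CR →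
    (∀ v, β.toFun (R v) ≤ CR * θ.toFun v) →
    (∀ p ∈ Segre 𝕜 Z, R p ∈ Segre 𝕜 X) →
    ∀ (T : MultilinearMap 𝕜 X Y), Mem β T → ∀ (S : Y →L[𝕜] W),
    Mem θ (toMulti (S.toLinearMap ∘ₗ PiTensorProduct.lift T ∘ₗ R)) ∧
      anorm θ (toMulti (S.toLinearMap ∘ₗ PiTensorProduct.lift T ∘ₗ R)) ≤
        CR * anorm β T * ‖S‖

/-- A Σ-tensor norm on spaces (Definition 4.1): an assignment, to each election, of a
norm on `X₁⊗⋯⊗Xₙ⊗Y` satisfying S1, S2 and the uniform property S3. -/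
structure SigmaTensorNormOnSpacesFin where
  tn : ∀ {ι : Type} [Fintype ι] [Nonempty ι] {X : ι → Type u}
    [∀ i, NormedAddCommGroup (X i)] [∀ i, NormedSpace 𝕜 (X i)] [∀ i, FiniteDimensional 𝕜 (X i)]
    {Y : Type u} [NormedAddCommGroup Y] [NormedSpace 𝕜 Y] [FiniteDimensional 𝕜 Y],
    ReasonableCrossnorm 𝕜 X → ((⨂[𝕜] i, X i) ⊗[𝕜] Y) → ℝ
  tn_add_le : ∀ {ι : Type} [Fintype ι] [Nonempty ι] {X : ι → Type u}
    [∀ i, NormedAddCommGroup (X i)] [∀ i, NormedSpace 𝕜 (X i)] [∀ i, FiniteDimensional 𝕜 (X i)]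
    {Y : Type u} [NormedAddCommGroup Y] [NormedSpace 𝕜 Y] [FiniteDimensional 𝕜 Y]
    (β : ReasonableCrossnorm 𝕜 X) (u v : (⨂[𝕜] i, X i) ⊗[𝕜] Y),
    tn β (u + v) ≤ tn β u + tn β v
  tn_smul : ∀ {ι : Type} [Fintype ι] [Nonempty ι] {X : ι → Type u}
    [∀ i, NormedAddCommGroup (X i)] [∀ i, NormedSpace 𝕜 (X i)] [∀ i, FiniteDimensional 𝕜 (X i)]
    {Y : Type u} [NormedAddCommGroup Y] [NormedSpace 𝕜 Y] [FiniteDimensional 𝕜 Y]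
    (β : ReasonableCrossnorm 𝕜 X) (c : 𝕜) (u : (⨂[𝕜] i, X i) ⊗[𝕜] Y),
    tn β (c • u) = ‖c‖ * tn β u
  /-- S1. -/
  S1 : ∀ {ι : Type} [Fintype ι] [Nonempty ι] {X : ι → Type u}
    [∀ i, NormedAddCommGroup (X i)] [∀ i, NormedSpace 𝕜 (X i)] [∀ i, FiniteDimensional 𝕜 (X i)]
    {Y : Type u} [NormedAddCommGroup Y] [NormedSpace 𝕜 Y] [FiniteDimensional 𝕜 Y]
    (β : ReasonableCrossnorm 𝕜 X), ∀ p ∈ Segre 𝕜 X, ∀ q ∈ Segre 𝕜 X, ∀ y : Y,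
    tn β ((p - q) ⊗ₜ[𝕜] y) ≤ β.toFun (p - q) * ‖y‖
  /-- S2. -/
  S2 : ∀ {ι : Type} [Fintype ι] [Nonempty ι] {X : ι → Type u}
    [∀ i, NormedAddCommGroup (X i)] [∀ i, NormedSpace 𝕜 (X i)] [∀ i, FiniteDimensional 𝕜 (X i)]
    {Y : Type u} [NormedAddCommGroup Y] [NormedSpace 𝕜 Y] [FiniteDimensional 𝕜 Y]
    (β : ReasonableCrossnorm 𝕜 X) (φ : (⨂[𝕜] i, X i) →ₗ[𝕜] 𝕜) (C : ℝ), 0 ≤ C →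
    (∀ w, ‖φ w‖ ≤ C * β.toFun w) → ∀ (g : Y →L[𝕜] 𝕜) (u : (⨂[𝕜] i, X i) ⊗[𝕜] Y),
    ‖funcSY φ g u‖ ≤ C * ‖g‖ * tn β u
  /-- S3: the uniform property. -/
  S3 : ∀ {ι κ : Type} [Fintype ι] [Nonempty ι] [Fintype κ] [Nonempty κ]
    {X : ι → Type u} [∀ i, NormedAddCommGroup (X i)] [∀ i, NormedSpace 𝕜 (X i)] [∀ i, FiniteDimensional 𝕜 (X i)]
    {Z : κ → Type u} [∀ j, NormedAddCommGroup (Z j)] [∀ j, NormedSpace 𝕜 (Z j)] [∀ j, FiniteDimensional 𝕜 (Z j)]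
    {Y W : Type u} [NormedAddCommGroup Y] [NormedSpace 𝕜 Y] [FiniteDimensional 𝕜 Y]
    [NormedAddCommGroup W] [NormedSpace 𝕜 W] [FiniteDimensional 𝕜 W]
    (β : ReasonableCrossnorm 𝕜 X) (θ : ReasonableCrossnorm 𝕜 Z)
    (R : (⨂[𝕜] j, Z j) →ₗ[𝕜] (⨂[𝕜] i, X i)) (CR : ℝ), 0 ≤ CR →
    (∀ v, β.toFun (R v) ≤ CR * θ.toFun v) →
    (∀ p ∈ Segre 𝕜 Z, R p ∈ Segre 𝕜 X) →
    ∀ (S : W →L[𝕜] Y) (u : (⨂[𝕜] j, Z j) ⊗[𝕜] W),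
    tn β (TensorProduct.map R S.toLinearMap u) ≤ CR * ‖S‖ * tn θ u

/-- A Σ-tensor norm on duals (Definition 4.2): an assignment, to each election, of a
norm on `𝓛^β(X₁,…,Xₙ) ⊗ Y` satisfying D1, D2 and the uniform property D3 with respect
to Σ-preserving operators. -/
structure SigmaTensorNormOnDualsFin where
  tn : ∀ {ι : Type} [Fintype ι] [Nonempty ι] {X : ι → Type u}
    [∀ i, NormedAddCommGroup (X i)] [∀ i, NormedSpace 𝕜 (X i)] [∀ i, FiniteDimensional 𝕜 (X i)]
    {Y : Type u} [NormedAddCommGroup Y] [NormedSpace 𝕜 Y] [FiniteDimensional 𝕜 Y]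
    (β : ReasonableCrossnorm 𝕜 X), ((BetaDual β) ⊗[𝕜] Y) → ℝ
  tn_add_le : ∀ {ι : Type} [Fintype ι] [Nonempty ι] {X : ι → Type u}
    [∀ i, NormedAddCommGroup (X i)] [∀ i, NormedSpace 𝕜 (X i)] [∀ i, FiniteDimensional 𝕜 (X i)]
    {Y : Type u} [NormedAddCommGroup Y] [NormedSpace 𝕜 Y] [FiniteDimensional 𝕜 Y]
    (β : ReasonableCrossnorm 𝕜 X) (v w : (BetaDual β) ⊗[𝕜] Y),
    tn β (v + w) ≤ tn β v + tn β w
  tn_smul : ∀ {ι : Type} [Fintype ι] [Nonempty ι] {X : ι → Type u}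
    [∀ i, NormedAddCommGroup (X i)] [∀ i, NormedSpace 𝕜 (X i)] [∀ i, FiniteDimensional 𝕜 (X i)]
    {Y : Type u} [NormedAddCommGroup Y] [NormedSpace 𝕜 Y] [FiniteDimensional 𝕜 Y]
    (β : ReasonableCrossnorm 𝕜 X) (c : 𝕜) (v : (BetaDual β) ⊗[𝕜] Y),
    tn β (c • v) = ‖c‖ * tn β v
  /-- D1. -/
  D1 : ∀ {ι : Type} [Fintype ι] [Nonempty ι] {X : ι → Type u}
    [∀ i, NormedAddCommGroup (X i)] [∀ i, NormedSpace 𝕜 (X i)] [∀ i, FiniteDimensional 𝕜 (X i)]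
    {Y : Type u} [NormedAddCommGroup Y] [NormedSpace 𝕜 Y] [FiniteDimensional 𝕜 Y]
    (β : ReasonableCrossnorm 𝕜 X) (f : BetaDual β) (C : ℝ), 0 ≤ C →
    (∀ u, ‖f.1 u‖ ≤ C * β.toFun u) → ∀ y : Y, tn β (f ⊗ₜ[𝕜] y) ≤ C * ‖y‖
  /-- D2. -/
  D2 : ∀ {ι : Type} [Fintype ι] [Nonempty ι] {X : ι → Type u}
    [∀ i, NormedAddCommGroup (X i)] [∀ i, NormedSpace 𝕜 (X i)] [∀ i, FiniteDimensional 𝕜 (X i)]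
    {Y : Type u} [NormedAddCommGroup Y] [NormedSpace 𝕜 Y] [FiniteDimensional 𝕜 Y]
    (β : ReasonableCrossnorm 𝕜 X), ∀ p ∈ Segre 𝕜 X, ∀ q ∈ Segre 𝕜 X,
    ∀ (g : Y →L[𝕜] 𝕜) (v : (BetaDual β) ⊗[𝕜] Y),
    ‖evalLD β v ((p - q) ⊗ₜ[𝕜] g)‖ ≤ β.toFun (p - q) * ‖g‖ * tn β v
  /-- D3: the uniform property with respect to Σ-preserving operators. -/
  D3 : ∀ {ι κ : Type} [Fintype ι] [Nonempty ι] [Fintype κ] [Nonempty κ]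
    {X : ι → Type u} [∀ i, NormedAddCommGroup (X i)] [∀ i, NormedSpace 𝕜 (X i)] [∀ i, FiniteDimensional 𝕜 (X i)]
    {Z : κ → Type u} [∀ j, NormedAddCommGroup (Z j)] [∀ j, NormedSpace 𝕜 (Z j)] [∀ j, FiniteDimensional 𝕜 (Z j)]
    {Y W : Type u} [NormedAddCommGroup Y] [NormedSpace 𝕜 Y] [FiniteDimensional 𝕜 Y]
    [NormedAddCommGroup W] [NormedSpace 𝕜 W] [FiniteDimensional 𝕜 W]
    (β : ReasonableCrossnorm 𝕜 X) (θ : ReasonableCrossnorm 𝕜 Z)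
    (A : (BetaDual β) →ₗ[𝕜] (BetaDual θ)) (CA : ℝ), 0 ≤ CA →
    (∀ (f : BetaDual β) (C : ℝ), 0 ≤ C → (∀ u, ‖f.1 u‖ ≤ C * β.toFun u) →
      ∀ w, ‖(A f).1 w‖ ≤ CA * C * θ.toFun w) →
    (∀ q ∈ Segre 𝕜 Z, ∃ p ∈ Segre 𝕜 X, ∀ f : BetaDual β, (A f).1 q = f.1 p) →
    ∀ (B : Y →L[𝕜] W) (v : (BetaDual β) ⊗[𝕜] Y),
    tn θ (TensorProduct.map A B.toLinearMap v) ≤ CA * ‖B‖ * tn β v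

end StructuresFin
section Predicates

variable {𝕜 : Type u} [RCLike 𝕜]

/-- Maximality of a Σ-ideal (Definition 3.2):
`A^β(T) = sup A^{β|}(Q_L f_T I_{E₁,…,Eₙ})` over finite dimensional subspaces
`Eᵢ ⊂ Xᵢ` and finite codimensional closed subspaces `L ⊂ Y`. -/
def SigmaIdeal.IsMaximal (I : SigmaIdeal 𝕜) : Prop :=
  ∀ {ι : Type} [Fintype ι] [Nonempty ι] {X : ι → Type u}
    [∀ i, NormedAddCommGroup (X i)] [∀ i, NormedSpace 𝕜 (X i)]
    [∀ i, CompleteSpace (X i)]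
    {Y : Type u} [NormedAddCommGroup Y] [NormedSpace 𝕜 Y] [CompleteSpace Y]
    (β : ReasonableCrossnorm 𝕜 X) (T : MultilinearMap 𝕜 X Y), I.Mem β T →
    I.anorm β T = sSup {r | ∃ (E : ∀ i, Submodule 𝕜 (X i))
      (_ : ∀ i, FiniteDimensional 𝕜 (E i)) (L : Submodule 𝕜 Y)
      (hL : IsClosed (L : Set Y)) (_ : FiniteDimensional 𝕜 (Y ⧸ L)),
      I.Mem (β.restrict E) (smallOp hL T E) ∧
        r = I.anorm (β.restrict E) (smallOp hL T E)}

/-- A Σ-tensor norm on spaces is finitely generated (Definition 4.3):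
`α^β(u; X, Y) = inf α^{β|}(u; E, F)` over finite dimensional subspaces containing `u`. -/
def SigmaTensorNormOnSpaces.IsFinitelyGenerated (α : SigmaTensorNormOnSpaces 𝕜) : Prop :=
  ∀ {ι : Type} [Fintype ι] [Nonempty ι] {X : ι → Type u}
    [∀ i, NormedAddCommGroup (X i)] [∀ i, NormedSpace 𝕜 (X i)]
    {Y : Type u} [NormedAddCommGroup Y] [NormedSpace 𝕜 Y]
    (β : ReasonableCrossnorm 𝕜 X) (u : (⨂[𝕜] i, X i) ⊗[𝕜] Y),
    α.tn β u = sInf {r | ∃ (E : ∀ i, Submodule 𝕜 (X i))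
      (_ : ∀ i, FiniteDimensional 𝕜 (E i)) (F : Submodule 𝕜 Y)
      (_ : FiniteDimensional 𝕜 F) (u₀ : (⨂[𝕜] i, (E i : Type u)) ⊗[𝕜] F),
      TensorProduct.map (PiTensorProduct.map fun i => (E i).subtype) F.subtype u₀ = u ∧
        r = α.tn (β.restrict E) u₀}

/-- A Σ-tensor norm on duals is cofinitely generated (Definition 4.5):
`ν^β(v) = sup ν^{β|}(R_{E₁,…,Eₙ} ⊗ Q_L (v))` over finite dimensional subspaces
`Eᵢ ⊂ Xᵢ` and finite codimensional closed subspaces `L ⊂ Y`. -/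
def SigmaTensorNormOnDuals.IsCofinitelyGenerated (ν : SigmaTensorNormOnDuals 𝕜) : Prop :=
  ∀ {ι : Type} [Fintype ι] [Nonempty ι] {X : ι → Type u}
    [∀ i, NormedAddCommGroup (X i)] [∀ i, NormedSpace 𝕜 (X i)]
    {Y : Type u} [NormedAddCommGroup Y] [NormedSpace 𝕜 Y]
    (β : ReasonableCrossnorm 𝕜 X) (v : (BetaDual β) ⊗[𝕜] Y),
    ν.tn β v = sSup {r | ∃ (E : ∀ i, Submodule 𝕜 (X i))
      (_ : ∀ i, FiniteDimensional 𝕜 (E i)) (L : Submodule 𝕜 Y)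
      (hL : IsClosed (L : Set Y)) (_ : FiniteDimensional 𝕜 (Y ⧸ L)),
      r = ν.tn (β.restrict E)
        (TensorProduct.map (restrictDual β E) L.mkQ v)}

end Predicates

section AuerbachHelpers

variable {𝕜 : Type u} [RCLike 𝕜] {V : Type u} [NormedAddCommGroup V] [NormedSpace 𝕜 V]

theorem clm_norm_le_one_of_ball {g : V →L[𝕜] 𝕜} (h : ∀ v : V, ‖v‖ ≤ 1 → ‖g v‖ ≤ 1) :
    ‖g‖ ≤ 1 := by
  refine g.opNorm_le_bound zero_le_one fun v => ?_
  rcases eq_or_ne v 0 with rfl | hv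
  · simp
  · have hnv : (0:ℝ) < ‖v‖ := norm_pos_iff.mpr hv
    have hne : ((‖v‖ : 𝕜)) ≠ 0 := by
      simpa using hnv.ne'
    have h1 : ‖((‖v‖ : 𝕜))⁻¹ • v‖ ≤ 1 := by
      rw [norm_smul, norm_inv, RCLike.norm_ofReal, abs_of_nonneg hnv.le]
      rw [inv_mul_cancel₀ hnv.ne']
    have h2 := h _ h1
    rw [map_smul, norm_smul, norm_inv, RCLike.norm_ofReal, abs_of_nonneg hnv.le] at h2
    have := mul_le_mul_of_nonneg_left h2 hnv.le
    rw [mul_one] at this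
    rw [← mul_assoc, mul_inv_cancel₀ hnv.ne', one_mul] at this
    linarith

set_option maxHeartbeats 2000000 in
theorem exists_auerbach_pair (x y : V) :
    ∃ (e₁ e₂ : V) (f₁ f₂ : V →L[𝕜] 𝕜), ‖e₁‖ ≤ 1 ∧ ‖e₂‖ ≤ 1 ∧ ‖f₁‖ ≤ 1 ∧ ‖f₂‖ ≤ 1 ∧
      x = f₁ x • e₁ + f₂ x • e₂ ∧ y = f₁ y • e₁ + f₂ y • e₂ := by
  have dep : ∀ a b : V, (∃ c : 𝕜, b = c • a) →
      ∃ (e₁ e₂ : V) (f₁ f₂ : V →L[𝕜] 𝕜), ‖e₁‖ ≤ 1 ∧ ‖e₂‖ ≤ 1 ∧ ‖f₁‖ ≤ 1 ∧ ‖f₂‖ ≤ 1 ∧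
        a = f₁ a • e₁ + f₂ a • e₂ ∧ b = f₁ b • e₁ + f₂ b • e₂ := by
    rintro a b ⟨c, rfl⟩
    rcases eq_or_ne a 0 with rfl | ha
    · exact ⟨0, 0, 0, 0, by simp, by simp, by simp, by simp, by simp, by simp⟩
    · obtain ⟨g, hg1, hga⟩ := exists_dual_vector 𝕜 a (norm_ne_zero_iff.mpr ha)
      have hnorm : (0:ℝ) < ‖a‖ := norm_pos_iff.mpr ha
      refine ⟨((‖a‖ : 𝕜))⁻¹ • a, 0, g, 0, ?_, by simp, le_of_eq hg1, by simp, ?_, ?_⟩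
      · rw [norm_smul, norm_inv, RCLike.norm_ofReal, abs_of_nonneg hnorm.le,
          inv_mul_cancel₀ hnorm.ne']
      · rw [hga, smul_smul, mul_inv_cancel₀ (by simpa using hnorm.ne' : ((‖a‖:𝕜)) ≠ 0)]
        simp
      · rw [map_smul, smul_eq_mul, hga, smul_smul, mul_assoc,
          mul_inv_cancel₀ (by simpa using hnorm.ne' : ((‖a‖:𝕜)) ≠ 0), mul_one]
        simp
  by_cases hy : ∃ c : 𝕜, y = c • x
  · exact dep x y hy
  by_cases hx : ∃ c : 𝕜, x = c • y
  · obtain ⟨e₁, e₂, f₁, f₂, h1, h2, h3, h4, h5, h6⟩ := dep y x hx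
    exact ⟨e₁, e₂, f₁, f₂, h1, h2, h3, h4, h6, h5⟩
  -- linearly independent case
  have hyne : y ≠ 0 := fun h => hy ⟨0, by simp [h]⟩
  have hli : LinearIndependent 𝕜 ![x, y] :=
    linearIndependent_fin2.mpr ⟨hyne, fun a h => hx ⟨a, h.symm⟩⟩
  set E : Submodule 𝕜 V := Submodule.span 𝕜 (Set.range ![x, y]) with hE
  haveI : FiniteDimensional 𝕜 E := FiniteDimensional.span_of_finite 𝕜 (Set.finite_range _)
  let b : Module.Basis (Fin 2) 𝕜 E := Module.Basis.span hli
  have hxE : x ∈ E := Submodule.subset_span ⟨0, rfl⟩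
  have hyE : y ∈ E := Submodule.subset_span ⟨1, rfl⟩
  -- the determinant function
  set d : E → E → 𝕜 := fun u v => b.repr u 0 * b.repr v 1 - b.repr u 1 * b.repr v 0 with hd
  have hcont : Continuous fun p : E × E => ‖d p.1 p.2‖ := by
    have h0 : Continuous fun u : E => b.repr u 0 := (b.coord 0).continuous_of_finiteDimensional
    have h1 : Continuous fun u : E => b.repr u 1 := (b.coord 1).continuous_of_finiteDimensional
    exact (((h0.comp continuous_fst).mul (h1.comp continuous_snd)).sub
      ((h1.comp continuous_fst).mul (h0.comp continuous_snd))).norm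
  have hKcompact : IsCompact ((Metric.closedBall (0:E) 1) ×ˢ (Metric.closedBall (0:E) 1)) :=
    (isCompact_closedBall _ _).prod (isCompact_closedBall _ _)
  have hKne : ((Metric.closedBall (0:E) 1) ×ˢ (Metric.closedBall (0:E) 1)).Nonempty :=
    ⟨(0,0), by simp⟩
  obtain ⟨⟨u₁, u₂⟩, hmem, hmax⟩ :=
    hKcompact.exists_isMaxOn hKne hcont.continuousOn
  have hu₁ : ‖u₁‖ ≤ 1 := by
    simpa using mem_closedBall_zero_iff.mp (Set.mem_prod.mp hmem).1
  have hu₂ : ‖u₂‖ ≤ 1 := by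
    simpa using mem_closedBall_zero_iff.mp (Set.mem_prod.mp hmem).2
  set m : 𝕜 := d u₁ u₂ with hm
  -- positivity of the max
  have hxne : x ≠ 0 := fun h => hx ⟨0, by simp [h]⟩
  have hnx : (0:ℝ) < ‖x‖ := norm_pos_iff.mpr hxne
  have hny : (0:ℝ) < ‖y‖ := norm_pos_iff.mpr hyne
  have hb0 : ((b 0 : E) : V) = x := by
    rw [show b 0 = Module.Basis.span hli 0 from rfl, Module.Basis.span_apply]; simp
  have hb1 : ((b 1 : E) : V) = y := by
    rw [show b 1 = Module.Basis.span hli 1 from rfl, Module.Basis.span_apply]; simp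
  have hnb0 : ‖(b 0 : E)‖ = ‖x‖ := by rw [← hb0]; rfl
  have hnb1 : ‖(b 1 : E)‖ = ‖y‖ := by rw [← hb1]; rfl
  have hcand : (((‖x‖:𝕜))⁻¹ • b 0, ((‖y‖:𝕜))⁻¹ • b 1) ∈
      (Metric.closedBall (0:E) 1) ×ˢ (Metric.closedBall (0:E) 1) := by
    constructor <;> rw [mem_closedBall_zero_iff] <;>
      rw [norm_smul, norm_inv, RCLike.norm_ofReal]
    · rw [abs_of_nonneg hnx.le, hnb0, inv_mul_cancel₀ hnx.ne']
    · rw [abs_of_nonneg hny.le, hnb1, inv_mul_cancel₀ hny.ne']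
  have hdval : ‖d (((‖x‖:𝕜))⁻¹ • b 0) (((‖y‖:𝕜))⁻¹ • b 1)‖ = ‖x‖⁻¹ * ‖y‖⁻¹ := by
    have h1 : d (((‖x‖:𝕜))⁻¹ • b 0) (((‖y‖:𝕜))⁻¹ • b 1) = ((‖x‖:𝕜))⁻¹ * ((‖y‖:𝕜))⁻¹ := by
      simp only [hd, map_smul, Finsupp.smul_apply, Module.Basis.repr_self, smul_eq_mul]
      rw [Finsupp.single_apply, Finsupp.single_apply, Finsupp.single_apply,
        Finsupp.single_apply]
      norm_num
    rw [h1, norm_mul, norm_inv, norm_inv, RCLike.norm_ofReal, RCLike.norm_ofReal,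
      abs_of_nonneg hnx.le, abs_of_nonneg hny.le]
  have hmpos : (0:ℝ) < ‖m‖ := by
    have := hmax hcand
    simp only [Set.mem_setOf_eq] at this
    calc (0:ℝ) < ‖x‖⁻¹ * ‖y‖⁻¹ := by positivity
      _ = ‖d (((‖x‖:𝕜))⁻¹ • b 0) (((‖y‖:𝕜))⁻¹ • b 1)‖ := hdval.symm
      _ ≤ ‖m‖ := this
  have hmne : m ≠ 0 := norm_pos_iff.mp hmpos
  -- the coordinate functionals
  set g₁ : E →ₗ[𝕜] 𝕜 :=
    { toFun := fun v => m⁻¹ * d v u₂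
      map_add' := fun v w => by simp only [hd, map_add, Finsupp.add_apply]; ring
      map_smul' := fun c v => by
        simp only [hd, map_smul, Finsupp.smul_apply, smul_eq_mul, RingHom.id_apply]; ring }
    with hg₁
  set g₂ : E →ₗ[𝕜] 𝕜 :=
    { toFun := fun v => m⁻¹ * d u₁ v
      map_add' := fun v w => by simp only [hd, map_add, Finsupp.add_apply]; ring
      map_smul' := fun c v => by
        simp only [hd, map_smul, Finsupp.smul_apply, smul_eq_mul, RingHom.id_apply]; ring }
    with hg₂
  have hg₁v : ∀ v : E, g₁ v = m⁻¹ * d v u₂ := fun _ => rfl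
  have hg₂v : ∀ v : E, g₂ v = m⁻¹ * d u₁ v := fun _ => rfl
  -- reconstruction on E
  have key : ∀ v : E, v = g₁ v • u₁ + g₂ v • u₂ := by
    intro v
    apply b.repr.injective
    refine Finsupp.ext fun i => ?_
    rw [map_add, map_smul, map_smul]
    simp only [Finsupp.add_apply, Finsupp.smul_apply, smul_eq_mul, hg₁v, hg₂v, hd]
    have hmexp : m = b.repr u₁ 0 * b.repr u₂ 1 - b.repr u₁ 1 * b.repr u₂ 0 := rfl
    rw [hmexp] at hmne ⊢
    fin_cases i <;>
    · simp only [Fin.zero_eta, Fin.mk_one, Fin.isValue]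
      generalize b.repr u₁ 0 = a0 at hmne ⊢
      generalize b.repr u₁ 1 = a1 at hmne ⊢
      generalize b.repr u₂ 0 = c0 at hmne ⊢
      generalize b.repr u₂ 1 = c1 at hmne ⊢
      generalize b.repr v 0 = w0
      generalize b.repr v 1 = w1
      field_simp
      ring
  -- norm bounds
  have hg₁b : ∀ v : E, ‖v‖ ≤ 1 → ‖g₁ v‖ ≤ 1 := by
    intro v hv
    have hvm : ((v, u₂) : E × E) ∈ Metric.closedBall (0:E) 1 ×ˢ Metric.closedBall (0:E) 1 :=
      ⟨mem_closedBall_zero_iff.mpr hv, mem_closedBall_zero_iff.mpr hu₂⟩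
    have := hmax hvm
    simp only [Set.mem_setOf_eq] at this
    have h2 : ‖g₁ v‖ = ‖m‖⁻¹ * ‖d v u₂‖ := by
      rw [hg₁v, norm_mul, norm_inv]
    rw [h2]
    calc ‖m‖⁻¹ * ‖d v u₂‖ ≤ ‖m‖⁻¹ * ‖m‖ :=
          mul_le_mul_of_nonneg_left this (by positivity)
      _ = 1 := inv_mul_cancel₀ hmpos.ne'
  have hg₂b : ∀ v : E, ‖v‖ ≤ 1 → ‖g₂ v‖ ≤ 1 := by
    intro v hv
    have hvm : ((u₁, v) : E × E) ∈ Metric.closedBall (0:E) 1 ×ˢ Metric.closedBall (0:E) 1 :=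
      ⟨mem_closedBall_zero_iff.mpr hu₁, mem_closedBall_zero_iff.mpr hv⟩
    have := hmax hvm
    simp only [Set.mem_setOf_eq] at this
    have h2 : ‖g₂ v‖ = ‖m‖⁻¹ * ‖d u₁ v‖ := by
      rw [hg₂v, norm_mul, norm_inv]
    rw [h2]
    calc ‖m‖⁻¹ * ‖d u₁ v‖ ≤ ‖m‖⁻¹ * ‖m‖ :=
          mul_le_mul_of_nonneg_left this (by positivity)
      _ = 1 := inv_mul_cancel₀ hmpos.ne'
  -- continuous versions and extensions
  let G₁ : E →L[𝕜] 𝕜 := ⟨g₁, g₁.continuous_of_finiteDimensional⟩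
  let G₂ : E →L[𝕜] 𝕜 := ⟨g₂, g₂.continuous_of_finiteDimensional⟩
  obtain ⟨f₁, hf₁ext, hf₁norm⟩ := exists_extension_norm_eq E G₁
  obtain ⟨f₂, hf₂ext, hf₂norm⟩ := exists_extension_norm_eq E G₂
  have hf₁ : ‖f₁‖ ≤ 1 := by rw [hf₁norm]; exact clm_norm_le_one_of_ball hg₁b
  have hf₂ : ‖f₂‖ ≤ 1 := by rw [hf₂norm]; exact clm_norm_le_one_of_ball hg₂b
  refine ⟨(u₁ : V), (u₂ : V), f₁, f₂, hu₁, hu₂, hf₁, hf₂, ?_, ?_⟩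
  · have hcoe := congrArg (Subtype.val) (key ⟨x, hxE⟩)
    simp only [Submodule.coe_add, SetLike.val_smul] at hcoe
    have e1 : f₁ x = g₁ ⟨x, hxE⟩ := hf₁ext ⟨x, hxE⟩
    have e2 : f₂ x = g₂ ⟨x, hxE⟩ := hf₂ext ⟨x, hxE⟩
    rw [e1, e2]
    exact hcoe
  · have hcoe := congrArg (Subtype.val) (key ⟨y, hyE⟩)
    simp only [Submodule.coe_add, SetLike.val_smul] at hcoe
    have e1 : f₁ y = g₁ ⟨y, hyE⟩ := hf₁ext ⟨y, hyE⟩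
    have e2 : f₂ y = g₂ ⟨y, hyE⟩ := hf₂ext ⟨y, hyE⟩
    rw [e1, e2]
    exact hcoe


theorem seminorm_sum_le' {𝕜 : Type u} [RCLike 𝕜] {M : Type u} [AddCommGroup M] [Module 𝕜 M]
    (p : Seminorm 𝕜 M) {α : Type} (s : Finset α) (f : α → M) :
    p (∑ i ∈ s, f i) ≤ ∑ i ∈ s, p (f i) := by
  classical
  induction s using Finset.induction with
  | empty => simp
  | insert a s h ih =>
    rw [Finset.sum_insert h, Finset.sum_insert h]
    exact (map_add_le_add p _ _).trans (by linarith)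

theorem card_filter_eval_zero {ι : Type} [Fintype ι] [DecidableEq ι] (i₀ : ι) :
    (Finset.univ.filter (fun ζ : ι → Fin 2 => ζ i₀ = 0)).card =
      2 ^ (Fintype.card ι - 1) := by
  rw [← Fintype.card_subtype]
  have e : {ζ : ι → Fin 2 // ζ i₀ = 0} ≃ ({ i : ι // i ≠ i₀ } → Fin 2) :=
    { toFun := fun ζ j => ζ.1 j.1
      invFun := fun h => ⟨fun i => if hi : i = i₀ then 0 else h ⟨i, hi⟩, by simp⟩
      left_inv := by
        rintro ⟨ζ, hζ⟩
        ext i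
        by_cases hi : i = i₀
        · subst hi; simp [hζ]
        · simp [hi]
      right_inv := by
        intro h
        ext j
        simp [j.2] }
  rw [Fintype.card_congr e, Fintype.card_fun]
  have h2 : Fintype.card {i : ι // i ≠ i₀} = Fintype.card ι - 1 := by
    rw [Fintype.card_subtype_compl, Fintype.card_subtype_eq]
  rw [Fintype.card_fin, h2]

end AuerbachHelpers

/-- all reasonable crossnorms induce Lipschitz equivalent metrics on the
Segre cone: `π(p − q) ≤ 2^(n−1) β(p − q)` for `p, q` decomposable. -/
theorem segre_crossnorm_lipschitz_equivalent
    {𝕜 : Type u} [RCLike 𝕜] {ι : Type} [Fintype ι] [Nonempty ι]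
    {X : ι → Type u} [∀ i, NormedAddCommGroup (X i)] [∀ i, NormedSpace 𝕜 (X i)]
    [∀ i, CompleteSpace (X i)]
    (β : ReasonableCrossnorm 𝕜 X)
    {p q : ⨂[𝕜] i, X i} (hp : p ∈ Segre 𝕜 X) (hq : q ∈ Segre 𝕜 X) :
    projectiveSeminorm (p - q) ≤ (2 : ℝ) ^ (Fintype.card ι - 1) * β.toFun (p - q) := by
  classical
  obtain ⟨xv, rfl⟩ := hp
  obtain ⟨yv, rfl⟩ := hq
  set u : ⨂[𝕜] i, X i := (⨂ₜ[𝕜] i, xv i) - (⨂ₜ[𝕜] i, yv i) with hu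
  set B : ℝ := β.toFun u with hBdef
  have hB0 : (0:ℝ) ≤ B := le_trans (epsSeminorm_nonneg u) (β.inj_le' u)
  obtain ⟨i₀⟩ := ‹Nonempty ι›
  -- Auerbach data in each coordinate
  have H : ∀ i : ι, ∃ e : Fin 2 → X i, ∃ f : Fin 2 → (X i →L[𝕜] 𝕜),
      (∀ k, ‖e k‖ ≤ 1) ∧ (∀ k, ‖f k‖ ≤ 1) ∧
      xv i = ∑ k : Fin 2, f k (xv i) • e k ∧ yv i = ∑ k : Fin 2, f k (yv i) • e k := by
    intro i
    obtain ⟨e₁, e₂, f₁, f₂, h1, h2, h3, h4, h5, h6⟩ :=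
      exists_auerbach_pair (𝕜 := 𝕜) (xv i) (yv i)
    refine ⟨![e₁, e₂], ![f₁, f₂], ?_, ?_, ?_, ?_⟩
    · intro k; fin_cases k <;> simpa
    · intro k; fin_cases k <;> simpa
    · rw [Fin.sum_univ_two]; simpa using h5
    · rw [Fin.sum_univ_two]; simpa using h6
  choose e f he hf hxx hyy using H
  -- expansion of the two elementary tensors
  set g : ∀ i, Fin 2 → X i := fun i k =>
    if i = i₀ then (if k = 0 then xv i else 0) else f i k (xv i) • e i k with hg
  set g' : ∀ i, Fin 2 → X i := fun i k =>
    if i = i₀ then (if k = 0 then yv i else 0) else f i k (yv i) • e i k with hg'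
  have hgx : ∀ i, xv i = ∑ k : Fin 2, g i k := by
    intro i
    by_cases h : i = i₀
    · simp [hg, h, Fin.sum_univ_two]
    · simp only [hg, if_neg h]; exact hxx i
  have hgy : ∀ i, yv i = ∑ k : Fin 2, g' i k := by
    intro i
    by_cases h : i = i₀
    · simp [hg', h, Fin.sum_univ_two]
    · simp only [hg', if_neg h]; exact hyy i
  have hpexp : (⨂ₜ[𝕜] i, xv i) = ∑ ζ : ι → Fin 2, ⨂ₜ[𝕜] i, g i (ζ i) := by
    have h1 : (⨂ₜ[𝕜] i, xv i) = PiTensorProduct.tprod 𝕜 (fun i => ∑ k : Fin 2, g i k) :=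
      congrArg (PiTensorProduct.tprod 𝕜) (funext hgx)
    rw [h1]
    exact MultilinearMap.map_sum _ g
  have hqexp : (⨂ₜ[𝕜] i, yv i) = ∑ ζ : ι → Fin 2, ⨂ₜ[𝕜] i, g' i (ζ i) := by
    have h1 : (⨂ₜ[𝕜] i, yv i) = PiTensorProduct.tprod 𝕜 (fun i => ∑ k : Fin 2, g' i k) :=
      congrArg (PiTensorProduct.tprod 𝕜) (funext hgy)
    rw [h1]
    exact MultilinearMap.map_sum _ g'
  have husum : u = ∑ ζ : ι → Fin 2,
      ((⨂ₜ[𝕜] i, g i (ζ i)) - ⨂ₜ[𝕜] i, g' i (ζ i)) := by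
    rw [hu, hpexp, hqexp, Finset.sum_sub_distrib]
  -- bound each summand
  have hbound : ∀ ζ : ι → Fin 2,
      projectiveSeminorm ((⨂ₜ[𝕜] i, g i (ζ i)) - ⨂ₜ[𝕜] i, g' i (ζ i)) ≤
        if ζ i₀ = 0 then B else 0 := by
    intro ζ
    by_cases h0 : ζ i₀ = 0
    case neg =>
      have hz1 : (⨂ₜ[𝕜] i, g i (ζ i)) = 0 :=
        MultilinearMap.map_coord_zero _ i₀ (by simp [hg, h0])
      have hz2 : (⨂ₜ[𝕜] i, g' i (ζ i)) = 0 :=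
        MultilinearMap.map_coord_zero _ i₀ (by simp [hg', h0])
      rw [if_neg h0, hz1, hz2, sub_zero]
      simp
    case pos =>
      rw [if_pos h0]
      set A : 𝕜 := ∏ i ∈ Finset.univ.erase i₀, f i (ζ i) (xv i) with hA
      set C : 𝕜 := ∏ i ∈ Finset.univ.erase i₀, f i (ζ i) (yv i) with hC
      set base : ∀ i, X i := fun i => if i = i₀ then 0 else e i (ζ i) with hbase
      set w : X i₀ := A • xv i₀ - C • yv i₀ with hwdef
      have hTx : (⨂ₜ[𝕜] i, g i (ζ i)) =
          A • PiTensorProduct.tprod 𝕜 (Function.update base i₀ (xv i₀)) := by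
        have h1 : (fun i => g i (ζ i)) = fun i =>
            (if i = i₀ then (1:𝕜) else f i (ζ i) (xv i)) •
              Function.update base i₀ (xv i₀) i := by
          funext i
          by_cases h : i = i₀
          · subst h; simp [hg, h0]
          · simp [hg, h, hbase, Function.update_of_ne h]
        rw [show (⨂ₜ[𝕜] i, g i (ζ i)) = PiTensorProduct.tprod 𝕜 (fun i => g i (ζ i)) from rfl, h1,
          MultilinearMap.map_smul_univ]
        have h2 : (∏ i, (if i = i₀ then (1:𝕜) else f i (ζ i) (xv i))) = A := by
          rw [← Finset.mul_prod_erase Finset.univ _ (Finset.mem_univ i₀), if_pos rfl,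
            one_mul, hA]
          exact Finset.prod_congr rfl fun i hi => if_neg (Finset.ne_of_mem_erase hi)
        rw [h2]
      have hTy : (⨂ₜ[𝕜] i, g' i (ζ i)) =
          C • PiTensorProduct.tprod 𝕜 (Function.update base i₀ (yv i₀)) := by
        have h1 : (fun i => g' i (ζ i)) = fun i =>
            (if i = i₀ then (1:𝕜) else f i (ζ i) (yv i)) •
              Function.update base i₀ (yv i₀) i := by
          funext i
          by_cases h : i = i₀
          · subst h; simp [hg', h0]
          · simp [hg', h, hbase, Function.update_of_ne h]
        rw [show (⨂ₜ[𝕜] i, g' i (ζ i)) = PiTensorProduct.tprod 𝕜 (fun i => g' i (ζ i)) from rfl, h1,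
          MultilinearMap.map_smul_univ]
        have h2 : (∏ i, (if i = i₀ then (1:𝕜) else f i (ζ i) (yv i))) = C := by
          rw [← Finset.mul_prod_erase Finset.univ _ (Finset.mem_univ i₀), if_pos rfl,
            one_mul, hC]
          exact Finset.prod_congr rfl fun i hi => if_neg (Finset.ne_of_mem_erase hi)
        rw [h2]
      have hD : (⨂ₜ[𝕜] i, g i (ζ i)) - (⨂ₜ[𝕜] i, g' i (ζ i)) =
          PiTensorProduct.tprod 𝕜 (Function.update base i₀ w) := by
        rw [hTx, hTy, hwdef, MultilinearMap.map_update_sub, MultilinearMap.map_update_smul,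
          MultilinearMap.map_update_smul]
      have hwB : ‖w‖ ≤ B := by
        by_cases hw0 : w = 0
        · rw [hw0, norm_zero]; exact hB0
        obtain ⟨g₀, hg₀n, hg₀w⟩ := exists_dual_vector 𝕜 w (norm_ne_zero_iff.mpr hw0)
        have hFle : ∀ i, ‖Function.update (fun j => f j (ζ j)) i₀ g₀ i‖ ≤ 1 := by
          intro i
          by_cases h : i = i₀
          · rw [h, Function.update_self, hg₀n]
          · rw [Function.update_of_ne h]
            exact hf i (ζ i)
        have hprodx : (∏ i, Function.update (fun j => f j (ζ j)) i₀ g₀ i (xv i)) =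
            g₀ (xv i₀) * A := by
          rw [← Finset.mul_prod_erase Finset.univ _ (Finset.mem_univ i₀),
            Function.update_self, hA]
          congr 1
          refine Finset.prod_congr rfl fun i hi => ?_
          rw [Function.update_of_ne (Finset.ne_of_mem_erase hi)]
        have hprody : (∏ i, Function.update (fun j => f j (ζ j)) i₀ g₀ i (yv i)) =
            g₀ (yv i₀) * C := by
          rw [← Finset.mul_prod_erase Finset.univ _ (Finset.mem_univ i₀),
            Function.update_self, hC]
          congr 1
          refine Finset.prod_congr rfl fun i hi => ?_
          rw [Function.update_of_ne (Finset.ne_of_mem_erase hi)]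
        have hval : PiTensorProduct.lift
            ((ContinuousMultilinearMap.mkPiAlgebra 𝕜 ι 𝕜).compContinuousLinearMap
              (Function.update (fun j => f j (ζ j)) i₀ g₀)).toMultilinearMap u = g₀ w := by
          rw [hu, map_sub]
          simp only [PiTensorProduct.lift.tprod, ContinuousMultilinearMap.coe_coe,
            ContinuousMultilinearMap.compContinuousLinearMap_apply,
            ContinuousMultilinearMap.mkPiAlgebra_apply]
          rw [hprodx, hprody, hwdef, map_sub, map_smul, map_smul, smul_eq_mul, smul_eq_mul]
          ring
        have hmem : ‖w‖ ∈ epsSet u :=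
          ⟨Function.update (fun j => f j (ζ j)) i₀ g₀, hFle,
            by rw [hval, hg₀w, RCLike.norm_ofReal, abs_of_nonneg (norm_nonneg w)]⟩
        exact le_trans (le_csSup (epsSet_bdd u) hmem) (β.inj_le' u)
      calc projectiveSeminorm ((⨂ₜ[𝕜] i, g i (ζ i)) - ⨂ₜ[𝕜] i, g' i (ζ i))
          = projectiveSeminorm (PiTensorProduct.tprod 𝕜 (Function.update base i₀ w)) := by rw [hD]
        _ ≤ ∏ i, ‖Function.update base i₀ w i‖ := projectiveSeminorm_tprod_le _
        _ ≤ ‖w‖ := by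
            rw [← Finset.mul_prod_erase Finset.univ _ (Finset.mem_univ i₀),
              Function.update_self]
            have hle1 : (∏ i ∈ Finset.univ.erase i₀, ‖Function.update base i₀ w i‖) ≤ 1 := by
              refine Finset.prod_le_one (fun i _ => norm_nonneg _) (fun i hi => ?_)
              have hne := Finset.ne_of_mem_erase hi
              simp only [Function.update_of_ne hne, hbase, if_neg hne]
              exact he i (ζ i)
            calc ‖w‖ * ∏ i ∈ Finset.univ.erase i₀, ‖Function.update base i₀ w i‖
                ≤ ‖w‖ * 1 := mul_le_mul_of_nonneg_left hle1 (norm_nonneg w)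
              _ = ‖w‖ := mul_one _
        _ ≤ B := hwB
  -- put everything together
  calc projectiveSeminorm u
      = projectiveSeminorm (∑ ζ : ι → Fin 2,
          ((⨂ₜ[𝕜] i, g i (ζ i)) - ⨂ₜ[𝕜] i, g' i (ζ i))) := by rw [← husum]
    _ ≤ ∑ ζ : ι → Fin 2,
          projectiveSeminorm ((⨂ₜ[𝕜] i, g i (ζ i)) - ⨂ₜ[𝕜] i, g' i (ζ i)) :=
        seminorm_sum_le' _ _ _
    _ ≤ ∑ ζ : ι → Fin 2, (if ζ i₀ = 0 then B else 0) :=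
        Finset.sum_le_sum fun ζ _ => hbound ζ
    _ = (Finset.univ.filter (fun ζ : ι → Fin 2 => ζ i₀ = 0)).card • B := by
        rw [← Finset.sum_filter, Finset.sum_const]
    _ = (2:ℝ) ^ (Fintype.card ι - 1) * B := by
        rw [card_filter_eval_zero i₀, nsmul_eq_mul]
        push_cast
        ring
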